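/- Let M be a matroid on a finite ground set E, and let 𝓕 and 𝓕' be flags of flats of M. Let 𝓕'' be the flag of flats whose underlying set of flats is |𝓕| ∩ |𝓕'| (this intersection is a chain of flats containing ∅ and E, hence a flag). Then 𝔠_𝓕 ∩ 𝔠_{𝓕'} = 𝔠_{𝓕''} as subsets of ℝ^E. -/

import Mathlib

open scoped BigOperators

/-- The `0-1` indicator vector `e_F ∈ ℝ^E` of a subset `F ⊆ E`. -/
noncomputable def eVec {α : Type*} (F : Set α) : α → ℝ := F.indicator 1

/-- A flag of flats `∅ = F_0 ⊊ F_1 ⊊ ⋯ ⊊ F_d = E` of a matroid `M`. -/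
def IsFlag {α : Type*} (M : Matroid α) (d : ℕ) (𝓕 : Fin (d + 1) → Set α) : Prop :=
  (∀ j, M.IsFlat (𝓕 j)) ∧ StrictMono 𝓕 ∧ 𝓕 0 = ∅ ∧ 𝓕 (Fin.last d) = M.E

/-- The cone `𝔠_𝓕 = { Σ_j λ_j e_{F_j} : λ_j ≥ 0 for j = 1, …, d−1 }` of a flag. -/
def flagCone {α : Type*} (d : ℕ) (𝓕 : Fin (d + 1) → Set α) : Set (α → ℝ) :=
  { x | ∃ lam : Fin (d + 1) → ℝ,
      (∀ j : Fin (d + 1), (j : ℕ) ≠ 0 → (j : ℕ) ≠ d → 0 ≤ lam j) ∧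
      x = ∑ j, lam j • eVec (𝓕 j) }

section Aux

variable {α : Type*} [Fintype α] {d : ℕ} {𝓕 : Fin (d + 1) → Set α}

open Classical in
lemma sum_apply_filter (𝓕 : Fin (d + 1) → Set α) (lam : Fin (d + 1) → ℝ) (a : α) :
    (∑ j, lam j • eVec (𝓕 j)) a
      = ∑ j ∈ Finset.univ.filter (fun j => a ∈ 𝓕 j), lam j := by
  rw [Finset.sum_apply, Finset.sum_filter]
  refine Finset.sum_congr rfl fun j _ => ?_
  by_cases h : a ∈ 𝓕 j <;> simp [eVec, Set.indicator_apply, h]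

lemma cone_eq_level (hmono : StrictMono 𝓕) (h0 : 𝓕 0 = ∅)
    (hlast : 𝓕 (Fin.last d) = Set.univ) :
    flagCone d 𝓕 = { x | ∀ t : ℝ, {a | t ≤ x a} ∈ Set.range 𝓕 } := by
  classical
  have hne : ∀ a : α, (Finset.univ.filter fun j => a ∈ 𝓕 j).Nonempty := fun a =>
    ⟨Fin.last d, Finset.mem_filter.2 ⟨Finset.mem_univ _, by rw [hlast]; trivial⟩⟩
  set m : α → Fin (d + 1) := fun a => (Finset.univ.filter fun j => a ∈ 𝓕 j).min' (hne a)
    with hm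
  have hms : ∀ a, a ∈ 𝓕 (m a) := fun a =>
    (Finset.mem_filter.1 (Finset.min'_mem _ (hne a))).2
  have hmle : ∀ a (j : Fin (d + 1)), a ∈ 𝓕 j → m a ≤ j := fun a j hj =>
    Finset.min'_le _ j (Finset.mem_filter.2 ⟨Finset.mem_univ _, hj⟩)
  have hiff : ∀ a (j : Fin (d + 1)), a ∈ 𝓕 j ↔ m a ≤ j := fun a j =>
    ⟨hmle a j, fun h => hmono.monotone h (hms a)⟩
  have hm0 : ∀ a, (m a : ℕ) ≠ 0 := by
    intro a hza
    have h1 : m a = 0 := Fin.ext hza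
    have h2 := hms a
    rw [h1, h0] at h2
    exact h2
  refine Set.Subset.antisymm ?_ ?_
  · rintro x ⟨lam, hnn, rfl⟩ t
    set T : Fin (d + 1) → ℝ := fun k => ∑ j ∈ Finset.univ.filter (fun j => k ≤ j), lam j
      with hT
    have hxa : ∀ a, (∑ j, lam j • eVec (𝓕 j)) a = T (m a) := by
      intro a
      rw [sum_apply_filter]
      refine Finset.sum_congr ?_ (fun _ _ => rfl)
      ext j
      simp [hiff a j]
    have hTanti : ∀ k₁ k₂ : Fin (d + 1), (k₁ : ℕ) ≠ 0 → k₁ ≤ k₂ → T k₂ ≤ T k₁ := by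
      intro k₁ k₂ hk1 hle
      refine Finset.sum_le_sum_of_subset_of_nonneg ?_ ?_
      · intro j hj
        simp only [Finset.mem_filter, Finset.mem_univ, true_and] at hj ⊢
        exact le_trans hle hj
      · intro j hj1 hj2
        simp only [Finset.mem_filter, Finset.mem_univ, true_and] at hj1 hj2
        have h1 := Fin.le_def.mp hj1
        have h2 := Fin.lt_def.mp (lt_of_not_ge hj2)
        have h3 := k₂.isLt
        have h4 := Fin.le_def.mp hle
        exact hnn j (by omega) (by omega)
    by_cases hK : (Finset.univ.filter fun k : Fin (d + 1) => (k : ℕ) ≠ 0 ∧ t ≤ T k).Nonempty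
    · have hk₀mem := Finset.max'_mem _ hK
      set k₀ := Finset.max' _ hK with hk₀
      simp only [Finset.mem_filter, Finset.mem_univ, true_and] at hk₀mem
      refine ⟨k₀, ?_⟩
      ext a
      simp only [Set.mem_setOf_eq]
      constructor
      · intro ha
        have h1 : m a ≤ k₀ := hmle a _ ha
        have h2 : T k₀ ≤ T (m a) := hTanti _ _ (hm0 a) h1
        rw [hxa a]
        exact le_trans hk₀mem.2 h2
      · intro ha
        rw [hxa a] at ha
        have hmem : m a ∈ Finset.univ.filter fun k : Fin (d + 1) => (k : ℕ) ≠ 0 ∧ t ≤ T k :=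
          Finset.mem_filter.2 ⟨Finset.mem_univ _, hm0 a, ha⟩
        exact hmono.monotone (Finset.le_max' _ _ hmem) (hms a)
    · refine ⟨0, ?_⟩
      rw [h0]
      ext a
      simp only [Set.mem_empty_iff_false, Set.mem_setOf_eq, false_iff]
      intro ha
      rw [hxa a] at ha
      exact hK ⟨m a, Finset.mem_filter.2 ⟨Finset.mem_univ _, hm0 a, ha⟩⟩
  · intro x hx
    simp only [Set.mem_setOf_eq] at hx
    have key : ∀ a b : α, m a ≤ m b → x b ≤ x a := by
      intro a b hab
      obtain ⟨j, hj⟩ := hx (x b)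
      have hbj : b ∈ 𝓕 j := by rw [hj]; exact le_refl (x b)
      have hle : m a ≤ j := le_trans hab (hmle b j hbj)
      have haj : a ∈ 𝓕 j := hmono.monotone hle (hms a)
      rw [hj] at haj
      exact haj
    have hrep : ∀ k : Fin (d + 1), (k : ℕ) ≠ 0 → ∃ a : α, m a = k := by
      intro k hk
      have hk1 : (k : ℕ) - 1 < d + 1 := lt_of_le_of_lt (Nat.sub_le _ _) k.isLt
      have hlt : (⟨(k : ℕ) - 1, hk1⟩ : Fin (d + 1)) < k := by
        rw [Fin.lt_def]
        simp only
        omega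
      obtain ⟨a, hak, hap⟩ := Set.exists_of_ssubset (hmono hlt)
      refine ⟨a, le_antisymm (hmle a k hak) ?_⟩
      by_contra hcon
      have hcon' : m a < k := lt_of_not_ge hcon
      have hle : m a ≤ (⟨(k : ℕ) - 1, hk1⟩ : Fin (d + 1)) := by
        rw [Fin.le_def]
        have := Fin.lt_def.mp hcon'
        simp only
        omega
      exact hap (hmono.monotone hle (hms a))
    choose rep hrepm using hrep
    set w : Fin (d + 1) → ℝ := fun k => if h : (k : ℕ) = 0 then 0 else x (rep k h) with hw
    have W1 : ∀ a, x a = w (m a) := by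
      intro a
      simp only [hw]
      rw [dif_neg (hm0 a)]
      have h1 := hrepm (m a) (hm0 a)
      exact le_antisymm (key _ a (le_of_eq h1)) (key a _ (le_of_eq h1.symm))
    have W2 : ∀ k₁ k₂ : Fin (d + 1), (k₁ : ℕ) ≠ 0 → k₁ ≤ k₂ → w k₂ ≤ w k₁ := by
      intro k₁ k₂ h1 h12
      have h2 : (k₂ : ℕ) ≠ 0 := by have := Fin.le_def.mp h12; omega
      simp only [hw]
      rw [dif_neg h1, dif_neg h2]
      refine key _ _ ?_
      rw [hrepm k₁ h1, hrepm k₂ h2]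
      exact h12
    set lam : Fin (d + 1) → ℝ := fun j =>
      if hj0 : (j : ℕ) = 0 then 0
      else if hjd : (j : ℕ) = d then w j
      else w j - w ⟨(j : ℕ) + 1, by have := j.isLt; omega⟩ with hlam
    have tail : ∀ n : ℕ, ∀ k : Fin (d + 1), (k : ℕ) ≠ 0 → d - (k : ℕ) = n →
        ∑ j ∈ Finset.univ.filter (fun j => k ≤ j), lam j = w k := by
      intro n
      induction n with
      | zero =>
        intro k hk0 hkd
        have hk : k = Fin.last d := by
          have := k.isLt
          apply Fin.ext
          simp only [Fin.val_last]
          omega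
        subst hk
        have hsingle : Finset.univ.filter (fun j => Fin.last d ≤ j) = {Fin.last d} := by
          ext j
          simp only [Finset.mem_filter, Finset.mem_univ, true_and, Finset.mem_singleton]
          exact ⟨fun h => le_antisymm (Fin.le_last j) h, fun h => h ▸ le_refl _⟩
        rw [hsingle, Finset.sum_singleton]
        simp only [hlam]
        rw [dif_neg hk0, dif_pos (Fin.val_last d)]
      | succ n ih =>
        intro k hk0 hkd
        have hklt : (k : ℕ) < d := by have := k.isLt; omega
        have hsucclt : (k : ℕ) + 1 < d + 1 := by omega
        have hsplit : Finset.univ.filter (fun j => k ≤ j)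
            = insert k (Finset.univ.filter (fun j => (⟨(k : ℕ) + 1, hsucclt⟩ : Fin (d + 1)) ≤ j)) := by
          ext j
          simp only [Finset.mem_filter, Finset.mem_univ, true_and, Finset.mem_insert,
            Fin.le_def, Fin.ext_iff]
          omega
        have hnotmem : k ∉ Finset.univ.filter
            (fun j => (⟨(k : ℕ) + 1, hsucclt⟩ : Fin (d + 1)) ≤ j) := by
          simp only [Finset.mem_filter, Finset.mem_univ, true_and, Fin.le_def]
          omega
        rw [hsplit, Finset.sum_insert hnotmem,
          ih ⟨(k : ℕ) + 1, hsucclt⟩ (by simp) (by simp; omega)]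
        have hlamk : lam k = w k - w ⟨(k : ℕ) + 1, hsucclt⟩ := by
          simp only [hlam]
          rw [dif_neg hk0, dif_neg (by omega : ¬ ((k : ℕ) = d))]
        rw [hlamk, sub_add_cancel]
    refine ⟨lam, ?_, ?_⟩
    · intro j hj0 hjd
      have hjlt : (j : ℕ) + 1 < d + 1 := by have := j.isLt; omega
      have hle : w (⟨(j : ℕ) + 1, hjlt⟩ : Fin (d + 1)) ≤ w j :=
        W2 j _ hj0 (by rw [Fin.le_def]; exact Nat.le_succ _)
      have hlamj : lam j = w j - w ⟨(j : ℕ) + 1, hjlt⟩ := by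
        simp only [hlam]
        rw [dif_neg hj0, dif_neg hjd]
      rw [hlamj]
      linarith
    · funext a
      rw [sum_apply_filter]
      have hfilter : Finset.univ.filter (fun j => a ∈ 𝓕 j)
          = Finset.univ.filter (fun j => m a ≤ j) := by
        ext j
        simp [hiff a j]
      rw [hfilter, tail (d - (m a : ℕ)) (m a) (hm0 a) rfl]
      exact W1 a

end Aux

/-- For flags of flats `𝓕, 𝓕'` of a matroid on a finite ground set, and the flag
`𝓕''` with underlying set of flats `|𝓕| ∩ |𝓕'|`, one has `𝔠_𝓕 ∩ 𝔠_{𝓕'} = 𝔠_{𝓕''}`. -/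
theorem flagCone_inter {α : Type*} [Fintype α] (M : Matroid α) (hE : M.E = Set.univ)
    (d d' d'' : ℕ) (𝓕 : Fin (d + 1) → Set α) (𝓕' : Fin (d' + 1) → Set α)
    (𝓕'' : Fin (d'' + 1) → Set α)
    (h𝓕 : IsFlag M d 𝓕) (h𝓕' : IsFlag M d' 𝓕') (h𝓕'' : IsFlag M d'' 𝓕'')
    (hrange : Set.range 𝓕'' = Set.range 𝓕 ∩ Set.range 𝓕') :
    flagCone d 𝓕 ∩ flagCone d' 𝓕' = flagCone d'' 𝓕'' := by
  obtain ⟨-, hm1, h01, hl1⟩ := h𝓕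
  obtain ⟨-, hm2, h02, hl2⟩ := h𝓕'
  obtain ⟨-, hm3, h03, hl3⟩ := h𝓕''
  rw [hE] at hl1 hl2 hl3
  rw [cone_eq_level hm1 h01 hl1, cone_eq_level hm2 h02 hl2, cone_eq_level hm3 h03 hl3]
  ext x
  simp only [Set.mem_inter_iff, Set.mem_setOf_eq, hrange]
  constructor
  · rintro ⟨h1, h2⟩ t
    exact ⟨h1 t, h2 t⟩
  · intro h
    exact ⟨fun t => (h t).1, fun t => (h t).2⟩
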